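/- arXiv:1903.02270 — 3 statements merged into one kernel-verified Lean document; each statement's English description precedes it below -/
import Mathlib

section
/- Let s be nonzero, M symmetric positive definite, l = M s, and H symmetric positive definite. Then the BFGS inverse update H_next = (I − s l^T/(s^T l)) H (I − l s^T/(s^T l)) + s s^T/(s^T l) is symmetric positive definite. -/
open Matrix

noncomputable def bfgsUpdate {n : ℕ} (H : Matrix (Fin n) (Fin n) ℝ)
    (s l : Fin n → ℝ) : Matrix (Fin n) (Fin n) ℝ :=
  (1 - (s ⬝ᵥ l)⁻¹ • Matrix.vecMulVec s l) * H * (1 - (s ⬝ᵥ l)⁻¹ • Matrix.vecMulVec l s)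
    + (s ⬝ᵥ l)⁻¹ • Matrix.vecMulVec s s

lemma vecMulVec_mulVec' {n : ℕ} (a b x : Fin n → ℝ) :
    (Matrix.vecMulVec a b) *ᵥ x = (b ⬝ᵥ x) • a := by
  ext i
  simp [Matrix.mulVec, Matrix.vecMulVec_apply, dotProduct, Finset.mul_sum,
    mul_comm, mul_left_comm]

theorem stmt_3 {n : ℕ} (M : Matrix (Fin n) (Fin n) ℝ) (hM : M.PosDef)
    (s : Fin n → ℝ) (hs : s ≠ 0) (l : Fin n → ℝ) (hl : l = M.mulVec s)
    (H : Matrix (Fin n) (Fin n) ℝ) (hH : H.PosDef) :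
    (bfgsUpdate H s l).PosDef := by
  have hc : 0 < s ⬝ᵥ l := by
    have := hM.dotProduct_mulVec_pos hs
    simpa [hl] using this
  set c : ℝ := s ⬝ᵥ l with hcdef
  set B : Matrix (Fin n) (Fin n) ℝ := 1 - c⁻¹ • Matrix.vecMulVec l s with hB
  have hBT : (1 - c⁻¹ • Matrix.vecMulVec s l) = Bᵀ := by
    simp [hB, Matrix.transpose_smul, Matrix.vecMulVec]
    ext i j
    simp [Matrix.vecMulVec_apply, mul_comm]
  have hupd : bfgsUpdate H s l = Bᵀ * H * B + c⁻¹ • Matrix.vecMulVec s s := by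
    rw [bfgsUpdate, hBT]
  rw [hupd, posDef_iff_dotProduct_mulVec]
  constructor
  · -- Hermitian
    have hH1 : Hᵀ = H := hH.1
    simp only [Matrix.IsHermitian, Matrix.conjTranspose_eq_transpose_of_trivial,
      Matrix.transpose_add, Matrix.transpose_smul, Matrix.transpose_mul,
      Matrix.transpose_transpose, hH1]
    congr 1
    · rw [Matrix.mul_assoc]
    · ext i j
      simp [Matrix.vecMulVec_apply, mul_comm]
  · intro x hx
    have hmv : (Bᵀ * H * B + c⁻¹ • Matrix.vecMulVec s s) *ᵥ x
        = Bᵀ *ᵥ (H *ᵥ (B *ᵥ x)) + c⁻¹ • ((s ⬝ᵥ x) • s) := by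
      rw [Matrix.add_mulVec, Matrix.smul_mulVec, vecMulVec_mulVec',
        ← Matrix.mulVec_mulVec, ← Matrix.mulVec_mulVec]
    rw [hmv]
    have hstar : (star x : Fin n → ℝ) = x := by simp
    rw [hstar, dotProduct_add]
    set y : Fin n → ℝ := B *ᵥ x with hy
    have h1 : x ⬝ᵥ (Bᵀ *ᵥ (H *ᵥ y)) = y ⬝ᵥ (H *ᵥ y) := by
      rw [Matrix.dotProduct_mulVec, Matrix.vecMul_transpose, hy]
    have h2 : x ⬝ᵥ (c⁻¹ • ((s ⬝ᵥ x) • s)) = c⁻¹ * (s ⬝ᵥ x) ^ 2 := by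
      rw [dotProduct_smul, dotProduct_smul, smul_eq_mul, smul_eq_mul]
      ring_nf
      rw [dotProduct_comm]
      ring
    rw [h1, h2]
    by_cases hsx : s ⬝ᵥ x = 0
    · -- then y = x
      have hyx : y = x := by
        simp [hy, hB, Matrix.sub_mulVec, Matrix.smul_mulVec, vecMulVec_mulVec', hsx]
      have := hH.dotProduct_mulVec_pos hx
      have hp : 0 < x ⬝ᵥ (H *ᵥ x) := by simpa using this
      rw [hyx, hsx]
      simpa using hp
    · have h1nn : 0 ≤ y ⬝ᵥ (H *ᵥ y) := by
        rcases eq_or_ne y 0 with h | h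
        · simp [h]
        · have := hH.dotProduct_mulVec_pos h
          have : 0 < y ⬝ᵥ (H *ᵥ y) := by simpa using this
          linarith
      have h2p : 0 < c⁻¹ * (s ⬝ᵥ x) ^ 2 :=
        mul_pos (inv_pos.mpr hc) (by positivity)
      linarith
end

section
/- Let s be nonzero, M symmetric positive definite, l = M s, H symmetric with H ⪯ M^{-1} (i.e., M^{-1} − H is positive semidefinite). Then the BFGS inverse update H_next = (I − s l^T/(s^T l)) H (I − l s^T/(s^T l)) + s s^T/(s^T l) also satisfies H_next ⪯ M^{-1}. -/
open Matrix

lemma vmv_mul {n : ℕ} (a b : Fin n → ℝ) (C : Matrix (Fin n) (Fin n) ℝ) :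
    vecMulVec a b * C = vecMulVec a (b ᵥ* C) := by
  ext i j
  simp [vecMulVec_apply, mul_apply, vecMul, dotProduct, Finset.mul_sum, mul_assoc,
    mul_comm, mul_left_comm]

lemma mul_vmv {n : ℕ} (a b : Fin n → ℝ) (C : Matrix (Fin n) (Fin n) ℝ) :
    C * vecMulVec a b = vecMulVec (C *ᵥ a) b := by
  ext i j
  simp [vecMulVec_apply, mul_apply, mulVec, dotProduct, Finset.sum_mul, Finset.mul_sum,
    mul_assoc, mul_comm, mul_left_comm]

theorem stmt_4 {n : ℕ} (M : Matrix (Fin n) (Fin n) ℝ) (hM : M.PosDef)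
    (s : Fin n → ℝ) (hs : s ≠ 0) (l : Fin n → ℝ) (hl : l = M.mulVec s)
    (H : Matrix (Fin n) (Fin n) ℝ) (hH : H.IsSymm)
    (hHM : (M⁻¹ - H).PosSemidef) :
    (M⁻¹ - bfgsUpdate H s l).PosSemidef := by
  have hdet : IsUnit M.det := isUnit_iff_ne_zero.mpr (ne_of_gt hM.det_pos)
  have hMinv : M⁻¹ * M = 1 := nonsing_inv_mul M hdet
  have hMt : Mᵀ = M := by
    have := hM.isHermitian.eq
    simpa using this
  have hMsym : M⁻¹ᵀ = M⁻¹ := by rw [transpose_nonsing_inv, hMt]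
  have hc : 0 < s ⬝ᵥ l := by
    rw [hl]; simpa [dotProduct_comm] using hM.dotProduct_mulVec_pos hs
  set c : ℝ := (s ⬝ᵥ l)⁻¹ with hcdef
  have hc1 : c * (s ⬝ᵥ l) = 1 := inv_mul_cancel₀ (ne_of_gt hc)
  have hMl : M⁻¹ *ᵥ l = s := by
    rw [hl, mulVec_mulVec, hMinv, one_mulVec]
  have hlM : l ᵥ* M⁻¹ = s := by
    rw [← hMsym, vecMul_transpose, hMl]
  have e1 : vecMulVec s l * M⁻¹ = vecMulVec s s := by rw [vmv_mul, hlM]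
  have e2 : M⁻¹ * vecMulVec l s = vecMulVec s s := by rw [mul_vmv, hMl]
  have e3 : vecMulVec s s * vecMulVec l s = (s ⬝ᵥ l) • vecMulVec s s := by
    ext i j
    simp [vecMulVec_apply, mul_apply, dotProduct, Finset.sum_mul, Finset.mul_sum,
      mul_comm, mul_left_comm, mul_assoc]
  set V : Matrix (Fin n) (Fin n) ℝ := 1 - c • vecMulVec s l with hV
  set W : Matrix (Fin n) (Fin n) ℝ := 1 - c • vecMulVec l s with hW
  have key1 : V * M⁻¹ * W = M⁻¹ - c • vecMulVec s s := by
    have h1 : V * M⁻¹ = M⁻¹ - c • vecMulVec s s := by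
      rw [hV, sub_mul, one_mul, smul_mul_assoc, e1]
    rw [h1, hW, mul_sub, mul_one, sub_mul, mul_smul_comm, e2, smul_mul_assoc,
      mul_smul_comm, e3, smul_smul, smul_smul, mul_assoc, hc1, mul_one]
    abel
  have key : M⁻¹ - bfgsUpdate H s l = V * (M⁻¹ - H) * W := by
    have expand : V * (M⁻¹ - H) * W = V * M⁻¹ * W - V * H * W := by
      rw [mul_sub V M⁻¹ H, sub_mul (V * M⁻¹) (V * H) W]
    rw [expand, key1]
    unfold bfgsUpdate
    rw [← hcdef, ← hV, ← hW]
    abel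
  have hWt : W = Vᴴ := by
    ext i j
    simp [hV, hW, conjTranspose_apply, vecMulVec_apply, one_apply, mul_comm, eq_comm]
  rw [key, hWt]
  exact hHM.mul_mul_conjTranspose_same V
end

section
/- Suppose H_0 is symmetric with H_0 ⪯ M^{-1} (M symmetric positive definite), and the sequence (H_k) is generated by the BFGS inverse update: H_{k+1} = (I − s_k l_k^T/(s_k^T l_k)) H_k (I − l_k s_k^T/(s_k^T l_k)) + s_k s_k^T/(s_k^T l_k) with s_k ≠ 0 and l_k = M s_k for each k. Then H_k ⪯ M^{-1} for all k. -/
open Matrix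

lemma vecMulVec_mul' {n : ℕ} (a b : Fin n → ℝ) (B : Matrix (Fin n) (Fin n) ℝ) :
    vecMulVec a b * B = vecMulVec a (b ᵥ* B) := by
  ext i j; simp [vecMulVec_apply, mul_apply, vecMul, dotProduct, Finset.mul_sum, mul_assoc]

lemma mul_vecMulVec' {n : ℕ} (a b : Fin n → ℝ) (B : Matrix (Fin n) (Fin n) ℝ) :
    B * vecMulVec a b = vecMulVec (B *ᵥ a) b := by
  ext i j; simp only [vecMulVec_apply, mul_apply, mulVec, dotProduct, Finset.sum_mul]
  exact Finset.sum_congr rfl fun x _ => by ring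

lemma vecMulVec_conjT {n : ℕ} (a b : Fin n → ℝ) : (vecMulVec a b)ᴴ = vecMulVec b a := by
  ext i j; simp [vecMulVec_apply, mul_comm]

lemma vecMulVec_transp {n : ℕ} (a b : Fin n → ℝ) : (vecMulVec a b)ᵀ = vecMulVec b a := by
  ext i j; simp [vecMulVec_apply, mul_comm]

lemma bfgs_step {n : ℕ} (M : Matrix (Fin n) (Fin n) ℝ) (hM : M.PosDef)
    (H : Matrix (Fin n) (Fin n) ℝ) (hH : (M⁻¹ - H).PosSemidef)
    (s : Fin n → ℝ) (hs : s ≠ 0) :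
    (M⁻¹ - bfgsUpdate H s (M *ᵥ s)).PosSemidef := by
  set l := M *ᵥ s with hl
  have hdet : IsUnit M.det := isUnit_iff_ne_zero.mpr hM.det_pos.ne'
  have hMT : Mᵀ = M := by simpa using hM.1.eq
  have hpos : 0 < s ⬝ᵥ l := by simpa using hM.dotProduct_mulVec_pos hs
  set c := (s ⬝ᵥ l)⁻¹ with hc'
  have hc : c * (s ⬝ᵥ l) = 1 := inv_mul_cancel₀ hpos.ne'
  have hlM : l ᵥ* M⁻¹ = s := by
    have h1 : l = s ᵥ* M := by rw [hl, ← Matrix.vecMul_transpose, hMT]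
    rw [h1, vecMul_vecMul, Matrix.mul_nonsing_inv _ hdet, vecMul_one]
  have hMl : M⁻¹ *ᵥ l = s := by
    rw [hl, mulVec_mulVec, Matrix.nonsing_inv_mul _ hdet, one_mulVec]
  have e1 : vecMulVec s l * M⁻¹ = vecMulVec s s := by rw [vecMulVec_mul', hlM]
  have e2 : M⁻¹ * vecMulVec l s = vecMulVec s s := by rw [mul_vecMulVec', hMl]
  have e3 : vecMulVec s s * vecMulVec l s = (s ⬝ᵥ l) • vecMulVec s s := by
    rw [vecMulVec_mul']
    ext i j
    simp only [vecMulVec_apply, Matrix.smul_apply, vecMul, dotProduct, smul_eq_mul, Finset.sum_mul]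
    rw [Finset.mul_sum]
    exact Finset.sum_congr rfl fun x _ => by ring
  set A : Matrix (Fin n) (Fin n) ℝ := 1 - c • vecMulVec s l with hA
  have hAH : Aᴴ = 1 - c • vecMulVec l s := by
    rw [hA]; simp [conjTranspose_sub, conjTranspose_smul, vecMulVec_conjT, vecMulVec_transp]
  have key : A * M⁻¹ * Aᴴ = M⁻¹ - c • vecMulVec s s := by
    rw [hAH, hA]
    simp only [Matrix.sub_mul, Matrix.mul_sub, Matrix.one_mul, Matrix.mul_one,
      Matrix.smul_mul, Matrix.mul_smul, e1, e2, e3, smul_smul]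
    rw [hc]; simp
  have hid : M⁻¹ - bfgsUpdate H s l = A * (M⁻¹ - H) * Aᴴ := by
    rw [Matrix.mul_sub, Matrix.sub_mul, key, bfgsUpdate, ← hc', ← hA, ← hAH]
    abel
  rw [hid]
  exact hH.mul_mul_conjTranspose_same A


theorem stmt_18 {n : ℕ} (M : Matrix (Fin n) (Fin n) ℝ) (hM : M.PosDef)
    (s : ℕ → Fin n → ℝ) (hs : ∀ k, s k ≠ 0)
    (H : ℕ → Matrix (Fin n) (Fin n) ℝ) (hH0 : (H 0).IsSymm)
    (hinit : (M⁻¹ - H 0).PosSemidef)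
    (hupd : ∀ k, H (k + 1) = bfgsUpdate (H k) (s k) (M.mulVec (s k))) :
    ∀ k, (M⁻¹ - H k).PosSemidef := by
  intro k
  induction k with
  | zero => exact hinit
  | succ k ih =>
    rw [hupd k]
    exact bfgs_step M hM (H k) ih (s k) (hs k)
end
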